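/- Let t be a positive integer and let G be the graph obtained from a cycle C_{2t} on vertices v₁, …, v_{2t} by adding, for each edge v_i v_{i+1} of the cycle (indices modulo 2t), a new vertex u_i adjacent to both v_i and v_{i+1}. Then γ^NN_s(G) = 0. -/

import Mathlib

open Finset

/-- The closed neighborhood of `v` in `G`, as a `Finset`. -/
def closedNbr {V : Type*} [Fintype V] [DecidableEq V] (G : SimpleGraph V) [DecidableRel G.Adj]
    (v : V) : Finset V := insert v (G.neighborFinset v)

/-- `f` is a nonnegative signed dominating function of `G`:
`f : V → {-1, 1}` and `∑_{u ∈ N[v]} f(u) ≥ 0` for every vertex `v`. -/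
def IsNNSDF {V : Type*} [Fintype V] [DecidableEq V] (G : SimpleGraph V) [DecidableRel G.Adj]
    (f : V → ℤ) : Prop :=
  (∀ v, f v = 1 ∨ f v = -1) ∧ ∀ v, 0 ≤ ∑ u ∈ closedNbr G v, f u

/-- The nonnegative signed domination number `γ^NN_s(G)`. -/
noncomputable def gammaNNs {V : Type*} [Fintype V] [DecidableEq V] (G : SimpleGraph V)
    [DecidableRel G.Adj] : ℤ :=
  sInf {w : ℤ | ∃ f : V → ℤ, IsNNSDF G f ∧ w = ∑ v, f v}

/-- The graph obtained from the cycle `C_{2t}` (on vertices `v_i = Sum.inl i`, `i ∈ ZMod (2t)`,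
with `v_i` adjacent to `v_{i+1}`) by adding, for each cycle edge `v_i v_{i+1}`, a new vertex
`u_i = Sum.inr i` adjacent exactly to `v_i` and `v_{i+1}` (indices modulo `2t`). -/
def cycleWithEars (t : ℕ) : SimpleGraph (ZMod (2 * t) ⊕ ZMod (2 * t)) :=
  SimpleGraph.fromRel fun x y =>
    match x, y with
    | Sum.inl i, Sum.inl j => j = i + 1
    | Sum.inr i, Sum.inl j => j = i ∨ j = i + 1
    | _, _ => False

noncomputable instance (t : ℕ) : DecidableRel (cycleWithEars t).Adj :=
  fun _ _ => Classical.dec _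

lemma closedNbr_inr (t : ℕ) [NeZero (2 * t)] (i : ZMod (2 * t)) :
    closedNbr (cycleWithEars t) (Sum.inr i) = {Sum.inr i, Sum.inl i, Sum.inl (i + 1)} := by
  ext x
  cases x with
  | inl k => simp only [closedNbr, mem_insert, SimpleGraph.mem_neighborFinset]; simp [cycleWithEars, SimpleGraph.fromRel_adj]
  | inr k => simp only [closedNbr, mem_insert, SimpleGraph.mem_neighborFinset]; simp [cycleWithEars, SimpleGraph.fromRel_adj]

lemma closedNbr_inl (t : ℕ) [NeZero (2 * t)] (j : ZMod (2 * t)) :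
    closedNbr (cycleWithEars t) (Sum.inl j) =
      {Sum.inl j, Sum.inl (j + 1), Sum.inl (j - 1), Sum.inr j, Sum.inr (j - 1)} := by
  ext x
  cases x with
  | inl k =>
      simp only [closedNbr, mem_insert, SimpleGraph.mem_neighborFinset]
      simp only [closedNbr, cycleWithEars, SimpleGraph.fromRel_adj, mem_insert,
        SimpleGraph.mem_neighborFinset, mem_singleton, eq_sub_iff_add_eq,
        Sum.inl.injEq, Sum.inr.injEq, reduceCtorEq, ne_eq, false_or, or_false]
      constructor
      · rintro (h | ⟨h1, h2 | h2⟩)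
        · exact Or.inl h
        · exact Or.inr (Or.inl h2)
        · exact Or.inr (Or.inr h2.symm)
      · rintro (h | h | h)
        · exact Or.inl h
        · by_cases hkj : k = j
          · exact Or.inl hkj
          · exact Or.inr ⟨fun hh => hkj hh.symm, Or.inl h⟩
        · by_cases hkj : k = j
          · exact Or.inl hkj
          · exact Or.inr ⟨fun hh => hkj hh.symm, Or.inr h.symm⟩
  | inr k =>
      simp only [closedNbr, mem_insert, SimpleGraph.mem_neighborFinset]
      simp only [closedNbr, cycleWithEars, SimpleGraph.fromRel_adj, mem_insert,
        SimpleGraph.mem_neighborFinset, mem_singleton, eq_sub_iff_add_eq,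
        Sum.inl.injEq, Sum.inr.injEq, reduceCtorEq, ne_eq, false_or, or_false,
        not_false_eq_true, true_and]
      constructor
      · rintro (h | h)
        · exact Or.inl h.symm
        · exact Or.inr h.symm
      · rintro (h | h)
        · exact Or.inl h.symm
        · exact Or.inr h.symm

/-- For a positive integer `t`, the graph obtained from `C_{2t}` by adding a
vertex adjacent to both endpoints of each cycle edge has `γ^NN_s(G) = 0`. -/
theorem gammaNNs_cycleWithEars (t : ℕ) (ht : 1 ≤ t) :
    haveI : NeZero (2 * t) := ⟨by omega⟩
    gammaNNs (cycleWithEars t) = 0 := by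
  haveI : NeZero (2 * t) := ⟨by omega⟩
  haveI : Fact (1 < 2 * t) := ⟨by omega⟩
  have h10 : (1 : ZMod (2 * t)) ≠ 0 := one_ne_zero
  have hadd : ∀ i : ZMod (2 * t), i ≠ i + 1 := by
    intro i h
    exact h10 (left_eq_add.mp h)
  have hsub : ∀ i : ZMod (2 * t), i ≠ i - 1 := by
    intro i h
    exact hadd i (eq_sub_iff_add_eq.mp h).symm
  -- the witness function
  set f₀ : (ZMod (2 * t) ⊕ ZMod (2 * t)) → ℤ := Sum.elim (fun _ => 1) (fun _ => -1) with hf₀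
  have hcard : ∑ _i : ZMod (2 * t), (1 : ℤ) = (2 * t : ℤ) := by
    simp [Finset.card_univ, ZMod.card]
  have hN : IsNNSDF (cycleWithEars t) f₀ := by
    constructor
    · rintro (i | i) <;> simp [hf₀]
    · rintro (j | i)
      · rw [closedNbr_inl]
        by_cases h2 : (j : ZMod (2 * t)) + 1 = j - 1
        · rw [← h2, Finset.insert_idem]
          rw [Finset.sum_insert (by simp [hadd j]),
            Finset.sum_insert (by simp),
            Finset.sum_insert (by simp [hsub j]),
            Finset.sum_singleton]
          simp [hf₀]
        · rw [Finset.sum_insert (by simp [hadd j, hsub j]),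
            Finset.sum_insert (by simp [h2]),
            Finset.sum_insert (by simp),
            Finset.sum_insert (by simp [hsub j]),
            Finset.sum_singleton]
          simp [hf₀]
      · rw [closedNbr_inr]
        rw [Finset.sum_insert (by simp),
          Finset.sum_insert (by simp [hadd i]),
          Finset.sum_singleton]
        simp [hf₀]
  have hw0 : ∑ v, f₀ v = 0 := by
    rw [Fintype.sum_sum_type]
    simp [hf₀]
  have h0mem : (0 : ℤ) ∈ {w : ℤ | ∃ f, IsNNSDF (cycleWithEars t) f ∧ w = ∑ v, f v} :=
    ⟨f₀, hN, hw0.symm⟩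
  have hlb : ∀ w ∈ {w : ℤ | ∃ f, IsNNSDF (cycleWithEars t) f ∧ w = ∑ v, f v}, (0 : ℤ) ≤ w := by
    rintro w ⟨f, ⟨hf1, hf2⟩, rfl⟩
    have key : ∀ i : ZMod (2 * t),
        1 ≤ f (Sum.inr i) + f (Sum.inl i) + f (Sum.inl (i + 1)) := by
      intro i
      have h := hf2 (Sum.inr i)
      rw [closedNbr_inr, Finset.sum_insert (by simp),
        Finset.sum_insert (by simp [hadd i]), Finset.sum_singleton] at h
      rcases hf1 (Sum.inr i) with h1 | h1 <;> rcases hf1 (Sum.inl i) with h2 | h2 <;>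
        rcases hf1 (Sum.inl (i + 1)) with h3 | h3 <;> omega
    have hsum : (2 * t : ℤ) ≤
        ∑ i : ZMod (2 * t), (f (Sum.inr i) + f (Sum.inl i) + f (Sum.inl (i + 1))) := by
      calc (2 * t : ℤ) = ∑ _i : ZMod (2 * t), (1 : ℤ) := hcard.symm
        _ ≤ _ := Finset.sum_le_sum fun i _ => key i
    have hshift : ∑ i : ZMod (2 * t), f (Sum.inl (i + 1)) =
        ∑ i : ZMod (2 * t), f (Sum.inl i) :=
      Fintype.sum_equiv (Equiv.addRight 1) _ _ (fun i => rfl)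
    have hsplit : ∑ i : ZMod (2 * t), (f (Sum.inr i) + f (Sum.inl i) + f (Sum.inl (i + 1)))
        = ∑ i : ZMod (2 * t), f (Sum.inr i) + 2 * ∑ i : ZMod (2 * t), f (Sum.inl i) := by
      rw [Finset.sum_add_distrib, Finset.sum_add_distrib, hshift]; ring
    have hvle : ∑ i : ZMod (2 * t), f (Sum.inl i) ≤ (2 * t : ℤ) := by
      calc ∑ i : ZMod (2 * t), f (Sum.inl i) ≤ ∑ _i : ZMod (2 * t), (1 : ℤ) :=
            Finset.sum_le_sum fun i _ => by rcases hf1 (Sum.inl i) with h | h <;> omega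
        _ = (2 * t : ℤ) := hcard
    rw [Fintype.sum_sum_type]
    rw [hsplit] at hsum
    linarith
  exact le_antisymm (csInf_le ⟨0, hlb⟩ h0mem) (le_csInf ⟨0, h0mem⟩ hlb)
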